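/- There exists a unique s_u ∈ ℝ such that f′(s_u) = 0. Moreover, s_u is the strict global maximum point of f, f(s_u) > 0, and f is strictly increasing on (−∞, s_u] and strictly decreasing on [s_u, ∞). -/

import Mathlib

open Real Filter Set

set_option maxHeartbeats 1000000 in
/-- Lemma 5.2(i) (scalar form): the fiber map `f` has a unique critical point `s_u`,
which is its strict global maximum, attained at a positive level; `f` is strictly
increasing on `(-∞, s_u]` and strictly decreasing on `[s_u, ∞)`. -/
theorem stmt7
    (N : ℕ) (hN : 5 ≤ N)
    (p μ A B C D : ℝ)
    (hp1 : 2 + 8 / (N : ℝ) < p) (hp2 : p < 2 * (N : ℝ) / ((N : ℝ) - 4))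
    (hμ : 0 < μ) (hA : 0 < A) (hB : 0 < B) (hC : 0 < C) (hD : 0 < D) :
    let q : ℝ := 2 * (N : ℝ) / ((N : ℝ) - 4)
    let γ : ℝ := (N : ℝ) * (p - 2) / (4 * p)
    let f : ℝ → ℝ := fun s =>
      exp (4 * s) / 2 * A + exp (2 * s) / 2 * B
        - μ * exp (2 * p * γ * s) / p * C - exp (2 * q * s) / q * D
    ∃ su : ℝ,
      deriv f su = 0 ∧
      (∀ s : ℝ, deriv f s = 0 → s = su) ∧
      0 < f su ∧
      (∀ s : ℝ, s ≠ su → f s < f su) ∧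
      StrictMonoOn f (Iic su) ∧
      StrictAntiOn f (Ici su) := by
  intro q γ f
  have hq : q = 2 * (N : ℝ) / ((N : ℝ) - 4) := rfl
  have hγ : γ = (N : ℝ) * (p - 2) / (4 * p) := rfl
  have hfdef : f = fun s => exp (4 * s) / 2 * A + exp (2 * s) / 2 * B
        - μ * exp (2 * p * γ * s) / p * C - exp (2 * q * s) / q * D := rfl
  have hN5 : (5:ℝ) ≤ (N:ℝ) := by exact_mod_cast hN
  have hN4 : (0:ℝ) < (N:ℝ) - 4 := by linarith
  have hN0 : (0:ℝ) < (N:ℝ) := by linarith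
  have h8N : (0:ℝ) < 8 / (N:ℝ) := by positivity
  have hp2' : (2:ℝ) < p := by linarith
  have hp0 : (0:ℝ) < p := by linarith
  have hq0 : (0:ℝ) < q := by rw [hq]; positivity
  have hq2 : (2:ℝ) < q := by rw [hq, lt_div_iff₀ hN4]; linarith
  have hγ0 : (0:ℝ) < γ := by
    rw [hγ]; exact div_pos (by nlinarith) (by positivity)
  have hNp8 : (8:ℝ) < (p - 2) * (N:ℝ) := (div_lt_iff₀ hN0).1 (by linarith)
  have hpγeq : 2 * p * γ = (N:ℝ) * (p - 2) / 2 := by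
    rw [hγ]; field_simp; ring
  have hpγ4 : (4:ℝ) < 2 * p * γ := by
    rw [hpγeq, lt_div_iff₀ (by norm_num : (0:ℝ) < 2)]; nlinarith
  set e1 : ℝ := 2 * p * γ - 4 with he1def
  set e2 : ℝ := 2 * q - 4 with he2def
  have he1 : (0:ℝ) < e1 := by simp only [he1def]; linarith
  have he2 : (0:ℝ) < e2 := by simp only [he2def]; linarith
  set g : ℝ → ℝ := fun s => 2*A + B * exp (-2*s) - 2*μ*γ*C * exp (e1*s) - 2*D * exp (e2*s)
    with hgdef
  -- derivative of exp (c * x)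
  have hexp : ∀ (c s : ℝ), HasDerivAt (fun x => exp (c*x)) (c * exp (c*s)) s := by
    intro c s
    simpa [Function.comp_def, mul_comm] using
      (Real.hasDerivAt_exp (c*s)).comp s ((hasDerivAt_id s).const_mul c)
  have hfd : ∀ s, HasDerivAt f (exp (4*s) * g s) s := by
    intro s
    have h1 := ((hexp 4 s).div_const 2).mul_const A
    have h2 := ((hexp 2 s).div_const 2).mul_const B
    have h3 := (((hexp (2*p*γ) s).const_mul μ).div_const p).mul_const C
    have h4 := ((hexp (2*q) s).div_const q).mul_const D
    have h5 := ((h1.add h2).sub h3).sub h4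
    rw [hfdef]
    refine h5.congr_deriv ?_
    symm
    have E1 : exp (4*s) * exp (-2*s) = exp (2*s) := by rw [← exp_add]; congr 1; ring
    have E2 : exp (4*s) * exp (e1*s) = exp (2*p*γ*s) := by
      rw [← exp_add]; congr 1; simp only [he1def]; ring
    have E3 : exp (4*s) * exp (e2*s) = exp (2*q*s) := by
      rw [← exp_add]; congr 1; simp only [he2def]; ring
    have t3 : μ * (2*p*γ * exp (2*p*γ*s)) / p * C = 2*μ*γ*C * exp (2*p*γ*s) := by
      field_simp
    have t4 : 2*q * exp (2*q*s) / q * D = 2*D * exp (2*q*s) := by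
      field_simp
    simp only [hgdef]
    rw [t3, t4]
    linear_combination B * E1 - 2*μ*γ*C * E2 - 2*D * E3
  have hderiv : deriv f = fun s => exp (4*s) * g s := funext fun s => (hfd s).deriv
  have hfdiff : Differentiable ℝ f := fun s => (hfd s).differentiableAt
  have hfcont : Continuous f := hfdiff.continuous
  -- g is strictly decreasing
  have hganti : StrictAnti g := by
    intro x y hxy
    simp only [hgdef]
    have h1 : exp (-2*y) < exp (-2*x) := exp_lt_exp.2 (by linarith)
    have h2 : exp (e1*x) < exp (e1*y) := exp_lt_exp.2 (by nlinarith)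
    have h3 : exp (e2*x) < exp (e2*y) := exp_lt_exp.2 (by nlinarith)
    have k1 := mul_lt_mul_of_pos_left h1 hB
    have k2 := mul_lt_mul_of_pos_left h2 (by positivity : (0:ℝ) < 2*μ*γ*C)
    have k3 := mul_lt_mul_of_pos_left h3 (by positivity : (0:ℝ) < 2*D)
    linarith
  -- a point where g is positive
  have hBtend : Tendsto (fun s => B * exp (-2*s)) atBot atTop :=
    (tendsto_const_mul_atTop_of_pos hB).2
      (Real.tendsto_exp_atTop.comp
        ((tendsto_const_mul_atTop_of_neg (by norm_num : (-2:ℝ) < 0)).2 tendsto_id))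
  obtain ⟨s1, hs1a, hs1b⟩ :=
    ((hBtend.eventually_gt_atTop (2*μ*γ*C + 2*D)).and (eventually_le_atBot 0)).exists
  have hgs1 : 0 < g s1 := by
    simp only [hgdef]
    have e1x : exp (e1*s1) ≤ 1 := exp_le_one_iff.2 (mul_nonpos_of_nonneg_of_nonpos he1.le hs1b)
    have e2x : exp (e2*s1) ≤ 1 := exp_le_one_iff.2 (mul_nonpos_of_nonneg_of_nonpos he2.le hs1b)
    have k2 := mul_le_mul_of_nonneg_left e1x (by positivity : (0:ℝ) ≤ 2*μ*γ*C)
    have k3 := mul_le_mul_of_nonneg_left e2x (by positivity : (0:ℝ) ≤ 2*D)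
    linarith
  -- a point where g is negative
  have hDtend : Tendsto (fun s => 2*D * exp (e2*s)) atTop atTop :=
    (tendsto_const_mul_atTop_of_pos (by positivity)).2
      (Real.tendsto_exp_atTop.comp ((tendsto_const_mul_atTop_of_pos he2).2 tendsto_id))
  obtain ⟨s2, hs2a, hs2b⟩ :=
    ((hDtend.eventually_gt_atTop (2*A + B)).and (eventually_ge_atTop 0)).exists
  have hgs2 : g s2 < 0 := by
    simp only [hgdef]
    have ex : exp (-2*s2) ≤ 1 := exp_le_one_iff.2 (by linarith)
    have k1 := mul_le_mul_of_nonneg_left ex hB.le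
    have k2 : (0:ℝ) ≤ 2*μ*γ*C * exp (e1*s2) := by positivity
    linarith
  have hgcont : Continuous g := by
    rw [hgdef]; fun_prop
  have hs12 : s1 < s2 := by
    by_contra h
    have := hganti.antitone (not_lt.1 h)
    linarith
  obtain ⟨su, hsu_mem, hsu0⟩ : ∃ su ∈ Icc s1 s2, g su = 0 := by
    have h := intermediate_value_Icc' hs12.le hgcont.continuousOn
    obtain ⟨su, hmem, hval⟩ := h ⟨hgs2.le, hgs1.le⟩
    exact ⟨su, hmem, hval⟩
  -- sign of g around su
  have hgpos : ∀ s < su, 0 < g s := fun s h => hsu0 ▸ hganti h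
  have hgneg : ∀ s, su < s → g s < 0 := fun s h => hsu0 ▸ hganti h
  have hder0 : deriv f su = 0 := by rw [hderiv]; simp [hsu0]
  have huniq : ∀ s, deriv f s = 0 → s = su := by
    intro s hs
    rw [hderiv] at hs
    have hg0 : g s = 0 := by
      rcases mul_eq_zero.1 hs with h | h
      · exact absurd h (exp_pos _).ne'
      · exact h
    exact hganti.injective (hg0.trans hsu0.symm)
  have hmono : StrictMonoOn f (Iic su) := by
    apply strictMonoOn_of_deriv_pos (convex_Iic su) hfcont.continuousOn
    intro x hx
    rw [interior_Iic] at hx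
    rw [hderiv]
    exact mul_pos (exp_pos _) (hgpos x hx)
  have hanti : StrictAntiOn f (Ici su) := by
    apply strictAntiOn_of_deriv_neg (convex_Ici su) hfcont.continuousOn
    intro x hx
    rw [interior_Ici] at hx
    rw [hderiv]
    exact mul_neg_of_pos_of_neg (exp_pos _) (hgneg x hx)
  have hmax : ∀ s : ℝ, s ≠ su → f s < f su := by
    intro s hs
    rcases lt_or_gt_of_ne hs with h | h
    · exact hmono (mem_Iic.2 h.le) (mem_Iic.2 le_rfl) h
    · exact hanti (mem_Ici.2 le_rfl) (mem_Ici.2 h.le) h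
  -- f tends to 0 at -infinity
  have hexp0 : ∀ c : ℝ, 0 < c → Tendsto (fun s => exp (c*s)) atBot (nhds 0) := fun c hc =>
    Real.tendsto_exp_atBot.comp ((tendsto_const_mul_atBot_of_pos hc).2 tendsto_id)
  have hftend : Tendsto f atBot (nhds 0) := by
    rw [hfdef]
    have h1 := ((hexp0 4 (by norm_num)).div_const 2).mul_const A
    have h2 := ((hexp0 2 (by norm_num)).div_const 2).mul_const B
    have h3 := (((hexp0 (2*p*γ) (by linarith)).const_mul μ).div_const p).mul_const C
    have h4 := ((hexp0 (2*q) (by linarith)).div_const q).mul_const D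
    have h5 := ((h1.add h2).sub h3).sub h4
    have hzero : (0:ℝ)/2*A + 0/2*B - μ*0/p*C - 0/q*D = 0 := by ring
    rw [hzero] at h5
    exact h5
  have h0le : 0 ≤ f (su - 1) := by
    refine le_of_tendsto hftend ?_
    filter_upwards [eventually_le_atBot (su - 1)] with s hs
    exact hmono.monotoneOn (mem_Iic.2 (by linarith)) (mem_Iic.2 (by linarith)) hs
  have hfsu : 0 < f su :=
    h0le.trans_lt (hmono (mem_Iic.2 (by linarith)) (mem_Iic.2 le_rfl) (by linarith))
  exact ⟨su, hder0, huniq, hfsu, hmax, hmono, hanti⟩
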